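/- In the monoid M = ⟨a, b | ab^n a = aba (n ≥ 2)⟩, the elements aba and ab^m a are equal for every m ≥ 1, but the elements ab^m (m ≥ 1) are pairwise distinct. -/

import Mathlib

open Relation

/-- Alphabet for the monoid `M`. -/
inductive AB : Type | a | b

/-- Alphabet for the monoid `N`. -/
inductive CD : Type | c | d

abbrev WM := FreeMonoid AB
abbrev WN := FreeMonoid CD

def a : WM := FreeMonoid.of AB.a
def b : WM := FreeMonoid.of AB.b
def c : WN := FreeMonoid.of CD.c
def d : WN := FreeMonoid.of CD.d

/-- The defining relation set of `M`: `a b^n a = a b a` for `n ≥ 2`. -/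
def rM : WM → WM → Prop := fun x y => ∃ n, 2 ≤ n ∧ x = a * b ^ n * a ∧ y = a * b * a

/-- The defining relation set of `N`. -/
def rN : WN → WN → Prop := fun x y =>
  (x = c * d ^ 2 * c ∨ x = c * d ^ 4 ∨ x = c * d ^ 3 * c ^ 2 ∨ x = c * d ^ 3 * (c * d * c)) ∧
    y = c * d * c

/-- Single-step rewriting relation of a rewriting system `R`. -/
def Step {α : Type} (R : FreeMonoid α → FreeMonoid α → Prop) (x y : FreeMonoid α) : Prop :=
  ∃ u v p q, R u v ∧ x = p * u * q ∧ y = p * v * q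

/-- A word is irreducible if no single-step rewrite applies to it. -/
def Irred {α : Type} (R : FreeMonoid α → FreeMonoid α → Prop) (w : FreeMonoid α) : Prop :=
  ∀ v, ¬ Step R w v

/-- Words `a^{i₀} b a^{i₁} b ⋯ b a^{i_k}` with `k ≥ 0`, all `i_j ≥ 1`. -/
def UM : Set WM :=
  {w | ∃ l : List ℕ, l ≠ [] ∧ (∀ i ∈ l, 1 ≤ i) ∧ w = ((l.map (a ^ ·)).intersperse b).prod}

/-- Words `c^{i₀} d c^{i₁} d ⋯ d c^{i_k}` with `k ≥ 0`, all `i_j ≥ 1`. -/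
def UN : Set WN :=
  {w | ∃ l : List ℕ, l ≠ [] ∧ (∀ i ∈ l, 1 ≤ i) ∧ w = ((l.map (c ^ ·)).intersperse d).prod}

/-- Normal forms for `M`. -/
def NM : Set WM :=
  {w | (∃ s : ℕ, w = b ^ s) ∨ (∃ s : ℕ, ∃ u ∈ UM, w = b ^ s * u) ∨
    (∃ s t : ℕ, ∃ u ∈ UM, 0 < t ∧ w = b ^ s * u * b ^ t)}

/-- Normal forms for `N`. -/
def NN : Set WN :=
  {w | (∃ p : ℕ, w = d ^ p) ∨ (∃ p : ℕ, ∃ v ∈ UN, w = d ^ p * v) ∨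
    (∃ p q r : ℕ, ∃ v ∈ UN, r ≤ 3 ∧ 0 < q + r ∧ w = d ^ p * v * (d ^ 3 * c) ^ q * d ^ r)}

/-- The substitution `a ↦ c`, `b ↦ d`. -/
def bar : WM →* WN := FreeMonoid.map fun x => match x with | AB.a => CD.c | AB.b => CD.d


/-- Invariant monoid: `(s, h)` records the length of the trailing `b`-run and whether
the word contains an `a`. -/
def Tinv : Type := ℕ × Bool

def tmk (n : ℕ) (h : Bool) : Tinv := (n, h)

instance : One Tinv := ⟨tmk 0 false⟩
instance : Mul Tinv := ⟨fun x y => if y.2 then y else (x.1 + y.1, x.2)⟩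

lemma tmul_def (x y : Tinv) : x * y = if y.2 then y else (x.1 + y.1, x.2) := rfl
lemma tone_def : (1 : Tinv) = tmk 0 false := rfl

instance : Monoid Tinv where
  mul_assoc := by
    rintro ⟨x, hx⟩ ⟨y, hy⟩ ⟨z, hz⟩
    cases hy <;> cases hz
    · exact congrArg (fun n => ((n, hx) : ℕ × Bool)) (Nat.add_assoc x y z)
    · rfl
    · rfl
    · rfl
  one_mul := by
    rintro ⟨x, hx⟩; cases hx
    · exact congrArg (fun n => ((n, false) : ℕ × Bool)) (Nat.zero_add x)
    · rfl
  mul_one := by rintro ⟨x, hx⟩; cases hx <;> rfl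

def phi : WM →* Tinv :=
  FreeMonoid.lift fun x => match x with | AB.a => tmk 0 true | AB.b => tmk 1 false

lemma phi_a : phi a = tmk 0 true := FreeMonoid.lift_eval_of _ _
lemma phi_b : phi b = tmk 1 false := FreeMonoid.lift_eval_of _ _

lemma mul_atrue (x : Tinv) : x * tmk 0 true = tmk 0 true := rfl

lemma phi_b_pow (m : ℕ) : phi (b ^ m) = tmk m false := by
  induction m with
  | zero => rw [pow_zero, map_one]; rfl
  | succ n ih => rw [pow_succ, map_mul, ih, phi_b, tmul_def]; simp [tmk]; rfl

lemma phi_abm (m : ℕ) : phi (a * b ^ m) = tmk m true := by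
  rw [map_mul, phi_a, phi_b_pow, tmul_def]; simp [tmk]; rfl

lemma conGen_le_ker : conGen rM ≤ Con.ker phi := by
  apply Con.conGen_le.mpr
  rintro x y ⟨n, hn, rfl, rfl⟩
  show phi _ = phi _
  simp only [map_mul, phi_a, mul_atrue]

/-- In `M`, `a b^m a = a b a` for all `m ≥ 1`, but the elements `a b^m` (`m ≥ 1`) are
pairwise distinct. -/
theorem stmt16 :
    (∀ m : ℕ, 1 ≤ m → (conGen rM).mk' (a * b ^ m * a) = (conGen rM).mk' (a * b * a)) ∧
    (∀ m₁ m₂ : ℕ, 1 ≤ m₁ → 1 ≤ m₂ →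
      (conGen rM).mk' (a * b ^ m₁) = (conGen rM).mk' (a * b ^ m₂) → m₁ = m₂) := by
  constructor
  · intro m hm
    rcases Nat.lt_or_ge m 2 with h | h
    · interval_cases m
      · rfl
    · exact (Con.eq _).mpr (ConGen.Rel.of _ _ ⟨m, h, rfl, rfl⟩)
  · intro m₁ m₂ _ _ h
    replace h := (Con.eq _).mp h
    have h2 : phi (a * b ^ m₁) = phi (a * b ^ m₂) := conGen_le_ker h
    rw [phi_abm, phi_abm] at h2
    have : m₁ = (tmk m₂ true).1 := congrArg Prod.fst h2
    exact this
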